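/- For every d ≥ 1, there exists a real (d,d,d+1)-Stiefel simplex code: d+1 orthogonal matrices X_1, ..., X_{d+1} ∈ O(d) with ||X_i - X_j||_Fro² = 2d+2 for all i ≠ j and sum_i X_i = 0. -/

import Mathlib

open Matrix Finset

noncomputable section

lemma exists_U (d : ℕ) (hd : 1 ≤ d) :
    ∃ U : Matrix (Fin (d+1)) (Fin d) ℝ,
      Uᵀ * U = 1 ∧
      U * Uᵀ = 1 - ((d:ℝ)+1)⁻¹ • (Matrix.of fun _ _ => (1:ℝ)) := by
  classical
  let ones : EuclideanSpace ℝ (Fin (d+1)) := WithLp.toLp 2 (fun _ => 1)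
  have hones_ne : ones ≠ 0 := by
    intro h
    have := congrArg (fun v : EuclideanSpace ℝ (Fin (d+1)) => v 0) h
    simp [ones] at this
  have hrank : Module.finrank ℝ ((ℝ ∙ ones)ᗮ) = d := by
    have h1 : Module.finrank ℝ (ℝ ∙ ones) = 1 := finrank_span_singleton hones_ne
    have h2 := Submodule.finrank_add_finrank_orthogonal (𝕜 := ℝ) (ℝ ∙ ones)
    have h3 : Module.finrank ℝ (EuclideanSpace ℝ (Fin (d+1))) = d + 1 :=
      finrank_euclideanSpace_fin
    omega
  let b : OrthonormalBasis (Fin d) ℝ ((ℝ ∙ ones)ᗮ) :=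
    (stdOrthonormalBasis ℝ _).reindex (finCongr hrank)
  have hsum : ∀ j : Fin d, ∑ i, ((b j : EuclideanSpace ℝ (Fin (d+1))) i) = 0 := by
    intro j
    have hm : (b j : EuclideanSpace ℝ (Fin (d+1))) ∈ (ℝ ∙ ones)ᗮ := (b j).2
    have h := Submodule.mem_orthogonal_singleton_iff_inner_right.mp hm
    rw [PiLp.inner_apply] at h
    simpa [RCLike.inner_apply, ones] using h
  have hortho : ∀ j j' : Fin d,
      ∑ i, (b j : EuclideanSpace ℝ (Fin (d+1))) i * (b j' : EuclideanSpace ℝ (Fin (d+1))) i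
        = if j = j' then 1 else 0 := by
    intro j j'
    have ho := b.orthonormal
    rw [orthonormal_iff_ite] at ho
    have h := ho j j'
    rw [Submodule.coe_inner, PiLp.inner_apply] at h
    simpa [RCLike.inner_apply, mul_comm (WithLp.ofLp (b j : EuclideanSpace ℝ (Fin (d+1))) _)] using h
  set U : Matrix (Fin (d+1)) (Fin d) ℝ :=
    Matrix.of (fun i j => (b j : EuclideanSpace ℝ (Fin (d+1))) i) with hU
  have hsumU : ∀ j : Fin d, ∑ i, U i j = 0 := fun j => hsum j
  have horthoU : ∀ j j' : Fin d, ∑ i, U i j * U i j' = if j = j' then 1 else 0 :=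
    fun j j' => hortho j j'
  have hUtU : Uᵀ * U = 1 := by
    ext a c
    simp only [Matrix.mul_apply, Matrix.transpose_apply, hU, Matrix.of_apply]
    rw [hortho a c]
    simp [Matrix.one_apply]
  have hsqrt : (Real.sqrt (d+1))⁻¹ * (Real.sqrt (d+1))⁻¹ = ((d:ℝ)+1)⁻¹ := by
    rw [← mul_inv]
    rw [Real.mul_self_sqrt (by positivity)]
  set W : Matrix (Fin (d+1)) (Fin (d+1)) ℝ :=
    Matrix.of (fun i j => if h : (j:ℕ) < d then U i ⟨j, h⟩ else (Real.sqrt (d+1))⁻¹) with hW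
  have hWtW : Wᵀ * W = 1 := by
    ext a c
    simp only [Matrix.mul_apply, Matrix.transpose_apply, hW, Matrix.of_apply]
    by_cases ha : (a:ℕ) < d <;> by_cases hc : (c:ℕ) < d
    · simp only [ha, hc, dif_pos]
      rw [show (∑ i, U i ⟨a, ha⟩ * U i ⟨c, hc⟩) = if (⟨a,ha⟩:Fin d) = ⟨c,hc⟩ then 1 else 0
          from hortho _ _]
      simp only [Matrix.one_apply, Fin.mk.injEq]
      congr 1
      simp [Fin.ext_iff]
    · simp only [ha, hc, dif_pos, dif_neg, not_false_iff]
      rw [← Finset.sum_mul, hsumU]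
      have : a ≠ c := by intro h; rw [h] at ha; exact hc ha
      simp [Matrix.one_apply, this]
    · simp only [ha, hc, dif_pos, dif_neg, not_false_iff]
      rw [← Finset.mul_sum, hsumU]
      have : a ≠ c := by intro h; exact ha (h ▸ hc)
      simp [Matrix.one_apply, this]
    · simp only [ha, hc, dif_neg, not_false_iff]
      have hac : a = c := by
        have h1 : (a:ℕ) = d := by omega
        have h2 : (c:ℕ) = d := by omega
        exact Fin.ext (h1.trans h2.symm)
      rw [Finset.sum_const, Finset.card_univ, Fintype.card_fin]
      simp [Matrix.one_apply, hac, hsqrt, nsmul_eq_mul]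
      field_simp
  have hWWt : W * Wᵀ = 1 := mul_eq_one_comm.mp hWtW
  have hUUt : U * Uᵀ = 1 - ((d:ℝ)+1)⁻¹ • (Matrix.of fun _ _ => (1:ℝ)) := by
    ext i i'
    have h := congrFun (congrFun hWWt i) i'
    simp only [Matrix.mul_apply, Matrix.transpose_apply, hW, Matrix.of_apply] at h
    rw [Fin.sum_univ_castSucc] at h
    simp only [Fin.coe_castSucc, Fin.is_lt, dif_pos, Fin.val_last, lt_irrefl, dif_neg,
      not_false_iff, hsqrt] at h
    have hcast : ∀ (x : Fin d) (hx : ((x.castSucc : Fin (d+1)):ℕ) < d),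
        (⟨(x.castSucc : Fin (d+1)), hx⟩ : Fin d) = x := by
      intro x hx; exact Fin.ext rfl
    simp only [Matrix.mul_apply, Matrix.transpose_apply, Matrix.sub_apply, Matrix.smul_apply,
      Matrix.of_apply, smul_eq_mul, mul_one]
    have hss : (∑ j : Fin d, W i (Fin.castSucc j) * W i' (Fin.castSucc j))
        = ∑ j : Fin d, U i j * U i' j := by
      apply Finset.sum_congr rfl
      intro x _
      simp [hW, Fin.is_lt]
    rw [← hss]
    linarith [h]
  exact ⟨U, hUtU, hUUt⟩

open Matrix

theorem exists_square_ssc (d : ℕ) (hd : 1 ≤ d) :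
    ∃ X : Fin (d + 1) → Matrix (Fin d) (Fin d) ℝ,
      (∀ i, (X i)ᵀ * X i = 1) ∧
      (∀ i j : Fin (d + 1), i ≠ j →
        ∑ a, ∑ b, (X i a b - X j a b) ^ 2 = 2 * d + 2) ∧
      ∑ i, X i = 0 := by
  classical
  obtain ⟨U, hUtU, hUUt⟩ := exists_U d hd
  set J : Matrix (Fin (d+1)) (Fin (d+1)) ℝ := Matrix.of (fun _ _ => (1:ℝ)) with hJ
  set c : ℝ := ((d:ℝ)+1)⁻¹ with hc
  have hcne : c ≠ 0 := by positivity
  -- U^T J = 0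
  have hUJ : Uᵀ * J = 0 := by
    have h1 : Uᵀ * (U * Uᵀ) = Uᵀ := by rw [← Matrix.mul_assoc, hUtU, Matrix.one_mul]
    rw [hUUt, Matrix.mul_sub, Matrix.mul_one, Matrix.mul_smul] at h1
    have h2 : c • (Uᵀ * J) = 0 := sub_eq_self.mp h1
    exact (smul_eq_zero.mp h2).resolve_left hcne
  have hJU : J * U = 0 := by
    have := congrArg Matrix.transpose hUJ
    rw [Matrix.transpose_mul, Matrix.transpose_transpose] at this
    have hJt : Jᵀ = J := by ext i j; simp [hJ]
    rw [hJt] at this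
    simpa using this
  -- the cyclic permutation matrices
  set P : Fin (d+1) → Matrix (Fin (d+1)) (Fin (d+1)) ℝ :=
    fun k => Matrix.of (fun i j => if j = i + k then 1 else 0) with hP
  have hP0 : P 0 = 1 := by
    ext i j; simp [hP, Matrix.one_apply, eq_comm]
  have hPtP : ∀ k l, (P k)ᵀ * P l = P (l - k) := by
    intro k l
    ext i j
    simp only [Matrix.mul_apply, Matrix.transpose_apply, hP, Matrix.of_apply]
    rw [Finset.sum_eq_single (i - k)]
    · have h1 : i - k + k = i := sub_add_cancel _ _
      have h2 : (i - k + l) = i + (l - k) := by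
        rw [sub_add_eq_add_sub, add_sub_assoc]
      rw [h1, h2, if_pos rfl, one_mul]
    · intro m _ hm
      have : i ≠ m + k := by
        intro h; exact hm (by rw [h, add_sub_cancel_right])
      simp [this]
    · intro h; exact absurd (Finset.mem_univ _) h
  have hPtJ : ∀ k, (P k)ᵀ * J = J := by
    intro k
    ext i j
    simp only [Matrix.mul_apply, Matrix.transpose_apply, hP, hJ, Matrix.of_apply, mul_one]
    rw [Finset.sum_eq_single (i - k)]
    · simp [sub_add_cancel]
    · intro m _ hm
      have : i ≠ m + k := by
        intro h; exact hm (by rw [h, add_sub_cancel_right])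
      simp [this]
    · intro h; exact absurd (Finset.mem_univ _) h
  have hsumP : ∑ k, P k = J := by
    ext i j
    simp only [Matrix.sum_apply, hP, hJ, Matrix.of_apply]
    rw [Finset.sum_eq_single (j - i)]
    · simp [add_sub_cancel]
    · intro k _ hk
      have : j ≠ i + k := by
        intro h; exact hk (by rw [h, add_sub_cancel_left])
      simp [this]
    · intro h; exact absurd (Finset.mem_univ _) h
  have htrP : ∀ m : Fin (d+1), m ≠ 0 → Matrix.trace (P m) = 0 := by
    intro m hm
    simp only [Matrix.trace, Matrix.diag, hP, Matrix.of_apply]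
    apply Finset.sum_eq_zero
    intro i _
    have : i ≠ i + m := by
      intro h
      exact hm (by simpa using (left_eq_add.mp h))
    simp [this]
  have htrPJ : ∀ m, Matrix.trace (P m * J) = (d:ℝ) + 1 := by
    intro m
    simp only [Matrix.trace, Matrix.diag, Matrix.mul_apply, hP, hJ, Matrix.of_apply, mul_one]
    have : ∀ i : Fin (d+1), (∑ m' : Fin (d+1), if m' = i + m then (1:ℝ) else 0) = 1 := by
      intro i; simp
    rw [Finset.sum_congr rfl (fun i _ => this i)]
    simp
  -- the code
  set X : Fin (d+1) → Matrix (Fin d) (Fin d) ℝ := fun k => Uᵀ * P k * U with hX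
  have hXX : ∀ k l, (X k)ᵀ * X l = Uᵀ * P (l - k) * U := by
    intro k l
    have ht : (X k)ᵀ = Uᵀ * (P k)ᵀ * U := by
      simp [hX, Matrix.transpose_mul, Matrix.mul_assoc]
    rw [ht, hX]
    calc Uᵀ * (P k)ᵀ * U * (Uᵀ * P l * U)
        = Uᵀ * (P k)ᵀ * (U * Uᵀ) * (P l * U) := by
          simp only [Matrix.mul_assoc]
      _ = Uᵀ * (P k)ᵀ * (P l * U) - c • (Uᵀ * (P k)ᵀ * J * (P l * U)) := by
          rw [hUUt, Matrix.mul_sub, Matrix.mul_one, Matrix.sub_mul,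
            Matrix.mul_smul, Matrix.smul_mul]
      _ = Uᵀ * P (l - k) * U := by
          have h1 : Uᵀ * (P k)ᵀ * J = 0 := by
            rw [Matrix.mul_assoc, hPtJ, hUJ]
          rw [h1]
          simp only [Matrix.zero_mul, smul_zero, sub_zero]
          rw [Matrix.mul_assoc, ← Matrix.mul_assoc ((P k)ᵀ), hPtP, ← Matrix.mul_assoc]
  have hXorth : ∀ k, (X k)ᵀ * X k = 1 := by
    intro k
    rw [hXX, sub_self, hP0, Matrix.mul_one, hUtU]
  have htrX : ∀ k l, k ≠ l → Matrix.trace ((X k)ᵀ * X l) = -1 := by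
    intro k l hkl
    rw [hXX]
    have hm : l - k ≠ 0 := sub_ne_zero.mpr (Ne.symm hkl)
    rw [Matrix.mul_assoc, Matrix.trace_mul_comm, Matrix.mul_assoc, hUUt]
    rw [Matrix.mul_sub, Matrix.mul_one, Matrix.mul_smul, Matrix.trace_sub, Matrix.trace_smul,
      htrP _ hm, htrPJ]
    simp [hc]
    field_simp
  have hsumX : ∑ i, X i = 0 := by
    have h1 : ∑ i, X i = Uᵀ * (∑ k, P k) * U := by
      rw [Matrix.mul_sum, Matrix.sum_mul]
    rw [h1, hsumP, Matrix.mul_assoc, hJU, Matrix.mul_zero]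
  -- converting sums of squares to traces
  have key : ∀ A B : Matrix (Fin d) (Fin d) ℝ,
      ∑ a, ∑ b, A a b * B a b = Matrix.trace (Aᵀ * B) := by
    intro A B
    simp only [Matrix.trace, Matrix.diag, Matrix.mul_apply, Matrix.transpose_apply]
    exact Finset.sum_comm
  refine ⟨X, hXorth, ?_, hsumX⟩
  intro i j hij
  have h1 : ∑ a, ∑ b, (X i a b - X j a b) ^ 2
      = Matrix.trace ((X i - X j)ᵀ * (X i - X j)) := by
    rw [← key]
    apply Finset.sum_congr rfl; intro a _
    apply Finset.sum_congr rfl; intro b _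
    simp [Matrix.sub_apply, sq]
  rw [h1]
  rw [Matrix.transpose_sub, Matrix.sub_mul, Matrix.mul_sub, Matrix.mul_sub]
  rw [Matrix.trace_sub, Matrix.trace_sub, Matrix.trace_sub]
  have htr1 : Matrix.trace ((X i)ᵀ * X i) = (d:ℝ) := by
    rw [hXorth]; simp [Matrix.trace_one]
  have htr2 : Matrix.trace ((X j)ᵀ * X j) = (d:ℝ) := by
    rw [hXorth]; simp [Matrix.trace_one]
  have htr3 := htrX i j hij
  have htr4 := htrX j i (Ne.symm hij)
  rw [htr1, htr2, htr3, htr4]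
  ring
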